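/- In the regret game, the common expected payoff at the profile where every player chooses risky is at least the common expected payoff at the profile where every player chooses safe if and only if v ≥ (1/p)·(1 + κ·(1−p)). That is, uniform adoption of the risky lottery Pareto dominates uniform adoption of the safe lottery exactly when the risky lottery is dominant; hence in the coordination range 1/p ≤ v ≤ (1/p)·(1 + κ·(1−p)) the all-safe equilibrium is Pareto optimal. -/
import Mathlib


namespace RegretGame

/-- An action in the regret game: choose the risky lottery or the safe lottery. -/
inductive Act : Type
  | risky : Act
  | safe : Act
deriving DecidableEq, Repr

/-- `numRisky a i` is the number of players other than `i` choosing the risky lottery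
at the action profile `a`. -/
def numRisky {N : ℕ} (a : Fin N → Act) (i : Fin N) : ℕ :=
  (Finset.univ.filter (fun j => j ≠ i ∧ a j = Act.risky)).card

/-- Player `i`'s expected payoff in the regret game at action profile `a`, given the
success probability `p`, coefficient of regret aversion `κ`, normalized good-state
payoff `v` of the risky lottery, and the information function `q` (the probability of
learning the risky outcome, as a function of how many of the others chose risky). -/
noncomputable def payoff {N : ℕ} (p κ v : ℝ) (q : ℕ → ℝ)
    (a : Fin N → Act) (i : Fin N) : ℝ :=
  if a i = Act.risky then p * v - (1 - p) * κ
  else 1 - p * q (numRisky a i) * κ * (v - 1)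

/-- A pure strategy Nash equilibrium of the regret game: no player can strictly
increase her expected payoff by unilaterally changing her own action. -/
def IsNash {N : ℕ} (p κ v : ℝ) (q : ℕ → ℝ) (a : Fin N → Act) : Prop :=
  ∀ (i : Fin N) (b : Act),
    payoff p κ v q (Function.update a i b) i ≤ payoff p κ v q a i

/-- In the regret game, the common expected payoff at the all-risky profile is at
least the common expected payoff at the all-safe profile if and only if
`v ≥ (1/p)·(1 + κ·(1−p))`; hence in the coordination range
`1/p ≤ v ≤ (1/p)·(1 + κ·(1−p))` the all-safe equilibrium is Pareto optimal. -/
theorem regret_game_welfare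
    (N : ℕ) (hN : 2 ≤ N) (p κ v : ℝ)
    (hp : 0 < p ∧ p < 1) (hκ : 0 < κ) (hv : 1 < v)
    (q : ℕ → ℝ)
    (hq01 : ∀ m ≤ N - 1, 0 ≤ q m ∧ q m ≤ 1)
    (hq0 : q 0 = 0) (hqN : q (N - 1) = 1)
    (hqmono : ∀ m₁ m₂, m₁ < m₂ → m₂ ≤ N - 1 → q m₁ < q m₂) :
    ((∀ i : Fin N,
        payoff p κ v q (fun _ : Fin N => Act.safe) i ≤
          payoff p κ v q (fun _ : Fin N => Act.risky) i) ↔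
      v ≥ (1 / p) * (1 + κ * (1 - p))) ∧
    (1 / p ≤ v → v ≤ (1 / p) * (1 + κ * (1 - p)) →
      ∀ i : Fin N,
        payoff p κ v q (fun _ : Fin N => Act.risky) i ≤
          payoff p κ v q (fun _ : Fin N => Act.safe) i) := by
  obtain ⟨hp0, hp1⟩ := hp
  have key : ∀ i : Fin N, payoff p κ v q (fun _ : Fin N => Act.safe) i = 1 := by
    intro i
    simp [payoff, numRisky, hq0]
  have keyr : ∀ i : Fin N, payoff p κ v q (fun _ : Fin N => Act.risky) i
      = p * v - (1 - p) * κ := by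
    intro i; simp [payoff]
  have hiff : (1 ≤ p * v - (1 - p) * κ) ↔ v ≥ (1 / p) * (1 + κ * (1 - p)) := by
    rw [ge_iff_le, one_div, inv_mul_le_iff₀ hp0]
    constructor <;> intro h <;> nlinarith
  have hne : Nonempty (Fin N) := ⟨⟨0, by omega⟩⟩
  constructor
  · constructor
    · intro h
      have := h (Classical.arbitrary (Fin N))
      rw [key, keyr] at this
      exact hiff.mp this
    · intro h i
      rw [key, keyr]
      exact hiff.mpr h
  · intro h1 h2 i
    rw [key, keyr]
    have : p * v - (1 - p) * κ ≤ 1 := by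
      rw [one_div, le_inv_mul_iff₀ hp0] at h2
      nlinarith
    linarith

end RegretGame
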